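/- Let p ≥ 1 be an integer and M a Hermitian s×s complex matrix with ‖M‖_∞ ≤ 1. For each integer m ≥ p, let D_m(M) denote the infimum of tr(q(M))^{1/p} over all polynomials q ∈ ℝ[x] for which there exist nonnegative reals b_α, c_α (α ∈ ℕ², α₁+α₂ ≤ m, only finitely many nonzero) with q(x) = (−x)^p + Σ_α b_α·(−x)^{α₁}(1+x)^{α₂} and q(x) = Σ_α c_α·x^{α₁}(1−x)^{α₂} as polynomial identities. Then d_p(M) ≤ d⁺_{p,m}(M) ≤ D_m(M) for every m, and D_m(M) converges monotonically downward to d_p(M) as m → ∞. -/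

import Mathlib

open scoped ComplexOrder

noncomputable section

open Polynomial Finset


/-- The negative part function `f_p` for a natural exponent `p`:
`f_p(x) = |x|^p` for `x < 0` and `0` otherwise. -/
def negPart (p : ℕ) (x : ℝ) : ℝ := if x < 0 then |x| ^ p else 0

lemma np_eq {p : ℕ} (hp : 1 ≤ p) : negPart p = fun x => max (-x) 0 ^ p := by
  funext x
  unfold _root_.negPart
  split_ifs with h
  · rw [abs_of_neg h, max_eq_left (by linarith)]
  · rw [max_eq_right (by linarith), zero_pow (by omega)]

lemma np_eq' {p : ℕ} (hp : 1 ≤ p) (x : ℝ) : negPart p x = max (-x) 0 ^ p := by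
  rw [np_eq hp]

lemma np_nonneg {p : ℕ} (hp : 1 ≤ p) (x : ℝ) : 0 ≤ negPart p x := by
  rw [np_eq hp]; positivity

lemma np_le_abs_pow {p : ℕ} (hp : 1 ≤ p) (x : ℝ) : negPart p x ≤ |x| ^ p := by
  rw [np_eq hp]
  exact pow_le_pow_left₀ (le_max_right _ _) (max_le (neg_le_abs x) (abs_nonneg x)) p

lemma np_antitone {p : ℕ} (hp : 1 ≤ p) : Antitone (negPart p) := by
  intro x y hxy
  rw [np_eq hp]
  exact pow_le_pow_left₀ (le_max_right _ _) (max_le_max (by linarith) le_rfl) p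

lemma convexOn_comp_pow {f : ℝ → ℝ} (hf0 : ∀ x, 0 ≤ f x)
    (hf : ∀ x y u v : ℝ, 0 ≤ u → 0 ≤ v → u + v = 1 → f (u * x + v * y) ≤ u * f x + v * f y)
    (p : ℕ) : ConvexOn ℝ Set.univ (fun x => f x ^ p) := by
  refine ⟨convex_univ, fun x _ y _ u v hu hv huv => ?_⟩
  simp only [smul_eq_mul]
  calc f (u * x + v * y) ^ p ≤ (u * f x + v * f y) ^ p :=
        pow_le_pow_left₀ (hf0 _) (hf x y u v hu hv huv) p
    _ ≤ u * f x ^ p + v * f y ^ p := by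
        have := (convexOn_pow p).2 (Set.mem_Ici.2 (hf0 x)) (Set.mem_Ici.2 (hf0 y)) hu hv huv
        simpa using this

lemma convexOn_negPart {p : ℕ} (hp : 1 ≤ p) : ConvexOn ℝ Set.univ (negPart p) := by
  rw [np_eq hp]
  refine convexOn_comp_pow (fun x => le_max_right _ _) (fun x y u v hu hv huv => ?_) p
  refine max_le ?_ (by positivity)
  calc -(u * x + v * y) = u * (-x) + v * (-y) := by ring
    _ ≤ u * max (-x) 0 + v * max (-y) 0 := by
        gcongr <;> [exact le_max_left _ _; exact le_max_left _ _]

lemma convexOn_abs_pow (p : ℕ) : ConvexOn ℝ Set.univ (fun x : ℝ => |x| ^ p) := by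
  refine convexOn_comp_pow (fun x => abs_nonneg x) (fun x y u v hu hv huv => ?_) p
  calc |u * x + v * y| ≤ |u * x| + |v * y| := abs_add_le _ _
    _ = u * |x| + v * |y| := by rw [abs_mul, abs_mul, abs_of_nonneg hu, abs_of_nonneg hv]

noncomputable section

lemma coneSum_ext {m m' : ℕ} (h : m ≤ m') (u v : ℝ[X]) (c : ℕ × ℕ → ℝ)
    (hc : ∀ α : ℕ × ℕ, m < α.1 + α.2 → c α = 0) :
    ∑ α ∈ Finset.range (m + 1) ×ˢ Finset.range (m + 1), C (c α) * u ^ α.1 * v ^ α.2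
      = ∑ α ∈ Finset.range (m' + 1) ×ˢ Finset.range (m' + 1),
          C (c α) * u ^ α.1 * v ^ α.2 := by
  apply Finset.sum_subset
  · exact Finset.product_subset_product
      (Finset.range_subset_range.2 (by omega)) (Finset.range_subset_range.2 (by omega))
  · intro α hα hnα
    have : m < α.1 + α.2 := by
      simp only [Finset.mem_product, Finset.mem_range] at hα hnα
      omega
    simp [hc α this]

def Bcone (m : ℕ) (q : ℝ[X]) : Prop :=
  ∃ c : ℕ × ℕ → ℝ, (∀ α, 0 ≤ c α) ∧ (∀ α : ℕ × ℕ, m < α.1 + α.2 → c α = 0) ∧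
    q = ∑ α ∈ Finset.range (m + 1) ×ˢ Finset.range (m + 1), C (c α) * X ^ α.1 * (1 - X) ^ α.2

lemma Bcone.mono {m m' : ℕ} (h : m ≤ m') {q : ℝ[X]} (hq : Bcone m q) : Bcone m' q := by
  obtain ⟨c, h0, hv, hrep⟩ := hq
  exact ⟨c, h0, fun α hα => hv α (by omega), by rw [hrep, coneSum_ext h _ _ c hv]⟩

lemma Bcone_zero (m : ℕ) : Bcone m 0 :=
  ⟨0, fun _ => le_rfl, fun _ _ => rfl, by simp⟩

lemma Bcone_add {m : ℕ} {q r : ℝ[X]} (hq : Bcone m q) (hr : Bcone m r) :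
    Bcone m (q + r) := by
  obtain ⟨c, h0, hv, hrep⟩ := hq
  obtain ⟨c', h0', hv', hrep'⟩ := hr
  refine ⟨c + c', fun α => add_nonneg (h0 α) (h0' α),
    fun α hα => by simp [hv α hα, hv' α hα], ?_⟩
  rw [hrep, hrep', ← Finset.sum_add_distrib]
  apply Finset.sum_congr rfl
  intro α _
  simp only [Pi.add_apply, C_add]
  ring

lemma Bcone_sum {m : ℕ} {ι : Type*} (s : Finset ι) (f : ι → ℝ[X])
    (h : ∀ i ∈ s, Bcone m (f i)) : Bcone m (∑ i ∈ s, f i) := by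
  classical
  induction s using Finset.induction_on with
  | empty => simpa using Bcone_zero m
  | insert _ _ hx ih =>
    rw [Finset.sum_insert hx]
    exact Bcone_add (h _ (Finset.mem_insert_self _ _))
      (ih fun i hi => h i (Finset.mem_insert_of_mem hi))

lemma Bcone_single {i j : ℕ} {a : ℝ} (ha : 0 ≤ a) :
    Bcone (i + j) (C a * X ^ i * (1 - X) ^ j) := by
  classical
  refine ⟨fun α => if α = (i, j) then a else 0,
    fun α => by dsimp only; split <;> simp [ha],
    fun α hα => by
      dsimp only
      rw [if_neg]
      rintro rfl
      omega, ?_⟩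
  rw [Finset.sum_eq_single (i, j)]
  · simp
  · intro α _ hne
    dsimp only
    rw [if_neg hne]
    simp
  · intro hmem
    exfalso
    apply hmem
    simp only [Finset.mem_product, Finset.mem_range]
    omega

lemma Bcone.natDegree_le {m : ℕ} {q : ℝ[X]} (hq : Bcone m q) : q.natDegree ≤ m := by
  obtain ⟨c, h0, hv, hrep⟩ := hq
  rw [hrep]
  apply Polynomial.natDegree_sum_le_of_forall_le
  intro α hα
  by_cases h : m < α.1 + α.2
  · simp [hv α h]
  · calc (C (c α) * X ^ α.1 * (1 - X) ^ α.2).natDegree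
        ≤ (C (c α) * X ^ α.1).natDegree + ((1 - X : ℝ[X]) ^ α.2).natDegree :=
          natDegree_mul_le
      _ ≤ ((C (c α)).natDegree + (X ^ α.1 : ℝ[X]).natDegree) + α.2 * (1 - X : ℝ[X]).natDegree :=
          add_le_add natDegree_mul_le natDegree_pow_le
      _ ≤ (0 + α.1) + α.2 * 1 := by
          gcongr
          · simp
          · simp [natDegree_X_pow]
          · exact le_trans (natDegree_sub_le _ _) (by simp)
      _ ≤ m := by omega

lemma Bcone.eval_nonneg {m : ℕ} {q : ℝ[X]} (hq : Bcone m q) {x : ℝ}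
    (h0 : 0 ≤ x) (h1 : x ≤ 1) : 0 ≤ q.eval x := by
  obtain ⟨c, hc0, hv, hrep⟩ := hq
  rw [hrep, eval_finset_sum]
  apply Finset.sum_nonneg
  intro α _
  simp only [eval_mul, eval_pow, eval_C, eval_X, eval_sub, eval_one]
  have h2 : (0:ℝ) ≤ 1 - x := by linarith
  exact mul_nonneg (mul_nonneg (hc0 α) (pow_nonneg h0 _)) (pow_nonneg h2 _)
noncomputable section

lemma prod_diff_bound (j : ℕ) (f g : ℕ → ℝ)
    (hf : ∀ i ∈ Finset.range j, |f i| ≤ 1) (hg : ∀ i ∈ Finset.range j, |g i| ≤ 1) :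
    |∏ i ∈ Finset.range j, f i - ∏ i ∈ Finset.range j, g i|
      ≤ ∑ i ∈ Finset.range j, |f i - g i| := by
  induction j with
  | zero => simp
  | succ j ih =>
    have hf' : ∀ i ∈ Finset.range j, |f i| ≤ 1 :=
      fun i hi => hf i (Finset.mem_range.2 (by simp at hi; omega))
    have hg' : ∀ i ∈ Finset.range j, |g i| ≤ 1 :=
      fun i hi => hg i (Finset.mem_range.2 (by simp at hi; omega))
    have hfj : |f j| ≤ 1 := hf j (Finset.mem_range.2 (by omega))
    have hgP : |∏ i ∈ Finset.range j, g i| ≤ 1 := by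
      rw [abs_prod]
      exact Finset.prod_le_one (fun i _ => abs_nonneg _) hg'
    rw [Finset.prod_range_succ, Finset.prod_range_succ, Finset.sum_range_succ]
    set Pf := ∏ i ∈ Finset.range j, f i
    set Pg := ∏ i ∈ Finset.range j, g i
    calc |Pf * f j - Pg * g j| = |(Pf - Pg) * f j + Pg * (f j - g j)| := by ring_nf
      _ ≤ |(Pf - Pg) * f j| + |Pg * (f j - g j)| := abs_add_le _ _
      _ = |Pf - Pg| * |f j| + |Pg| * |f j - g j| := by rw [abs_mul, abs_mul]
      _ ≤ |Pf - Pg| * 1 + 1 * |f j - g j| :=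
          add_le_add (mul_le_mul_of_nonneg_left hfj (abs_nonneg _))
            (mul_le_mul_of_nonneg_right hgP (abs_nonneg _))
      _ ≤ (∑ i ∈ Finset.range j, |f i - g i|) + |f j - g j| := by
          rw [mul_one, one_mul]
          exact add_le_add_left (ih hf' hg') _

lemma ratio_eq {n k j : ℕ} (hj : j ≤ k) (hk : k ≤ n) :
    (((n - j).choose (k - j) : ℕ) : ℝ)
      = (n.choose k : ℝ) * ∏ i ∈ Finset.range j, (((k : ℝ) - i) / ((n : ℝ) - i)) := by
  have h1 : (n.choose k : ℝ) * (k.choose j : ℝ)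
      = (n.choose j : ℝ) * ((n - j).choose (k - j) : ℝ) := by
    exact_mod_cast congrArg (Nat.cast : ℕ → ℝ) (Nat.choose_mul (n := n) hj)
  have hdk : ((k.descFactorial j : ℕ) : ℝ) = ∏ i ∈ Finset.range j, ((k : ℝ) - i) := by
    rw [Nat.descFactorial_eq_prod_range, Nat.cast_prod]
    exact Finset.prod_congr rfl fun i hi => by
      have : i ≤ k := le_trans (le_of_lt (Finset.mem_range.1 hi)) hj
      push_cast [Nat.cast_sub this]; ring
  have hdn : ((n.descFactorial j : ℕ) : ℝ) = ∏ i ∈ Finset.range j, ((n : ℝ) - i) := by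
    rw [Nat.descFactorial_eq_prod_range, Nat.cast_prod]
    exact Finset.prod_congr rfl fun i hi => by
      have : i ≤ n := le_trans (le_of_lt (Finset.mem_range.1 hi)) (hj.trans hk)
      push_cast [Nat.cast_sub this]; ring
  have hdkf : ((k.descFactorial j : ℕ) : ℝ) = (j.factorial : ℝ) * (k.choose j : ℝ) := by
    exact_mod_cast congrArg (Nat.cast : ℕ → ℝ) (Nat.descFactorial_eq_factorial_mul_choose k j)
  have hdnf : ((n.descFactorial j : ℕ) : ℝ) = (j.factorial : ℝ) * (n.choose j : ℝ) := by
    exact_mod_cast congrArg (Nat.cast : ℕ → ℝ) (Nat.descFactorial_eq_factorial_mul_choose n j)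
  have hCnj : (0 : ℝ) < (n.choose j : ℝ) := by
    exact_mod_cast Nat.choose_pos (hj.trans hk)
  have hfac : (0 : ℝ) < (j.factorial : ℝ) := by exact_mod_cast j.factorial_pos
  have hdnpos : (0 : ℝ) < ((n.descFactorial j : ℕ) : ℝ) := by
    rw [hdnf]; positivity
  have hprod : ∏ i ∈ Finset.range j, (((k : ℝ) - i) / ((n : ℝ) - i))
      = (k.choose j : ℝ) / (n.choose j : ℝ) := by
    rw [Finset.prod_div_distrib, ← hdk, ← hdn, hdkf, hdnf,
      mul_div_mul_left _ _ (ne_of_gt hfac)]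
  rw [hprod]
  field_simp
  linarith [h1]

lemma factor_bound {n k j i : ℕ} (hi : i < j) (hj : j ≤ k) (hk : k ≤ n) (h2j : 2 * j ≤ n) :
    |((k : ℝ) - i) / ((n : ℝ) - i) - (k : ℝ) / n| ≤ 2 * j / n := by
  have hn0 : (0 : ℝ) < n := by
    have : 0 < n := by omega
    exact_mod_cast this
  have hni : (0 : ℝ) < (n : ℝ) - i := by
    have : i < n := by omega
    have := (Nat.cast_lt (α := ℝ)).2 this
    linarith
  have hkn : (k : ℝ) ≤ n := by exact_mod_cast hk
  have hik : (i : ℝ) ≤ j := by exact_mod_cast le_of_lt hi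
  have h2i : 2 * (i : ℝ) ≤ n := by
    have : 2 * i ≤ n := by omega
    exact_mod_cast this
  have key : ((k : ℝ) - i) / ((n : ℝ) - i) - (k : ℝ) / n
      = -((i : ℝ) * ((n : ℝ) - k)) / ((n : ℝ) * ((n : ℝ) - i)) := by
    field_simp
    ring
  rw [key, abs_div, abs_neg]
  have hnum : (0:ℝ) ≤ (i : ℝ) * ((n : ℝ) - k) := by
    apply mul_nonneg (by positivity)
    linarith
  have hden : (0:ℝ) < (n : ℝ) * ((n : ℝ) - i) := by positivity
  rw [abs_of_nonneg hnum, abs_of_pos hden, div_le_div_iff₀ hden hn0]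
  have hj' : (0:ℝ) ≤ (j:ℝ) := by positivity
  have hA : (i:ℝ) * ((n:ℝ) - k) ≤ (j:ℝ) * (n:ℝ) :=
    mul_le_mul hik (by linarith) (by linarith) hj'
  have hB : (n:ℝ) ≤ 2 * ((n:ℝ) - i) := by linarith
  nlinarith [mul_le_mul_of_nonneg_right hA (le_of_lt hn0),
    mul_le_mul_of_nonneg_left hB (mul_nonneg hj' (le_of_lt hn0))]

/-! ### Bernstein coefficient error bound -/

lemma rho_bound {n k j d : ℕ} (hk : k ≤ n) (hjd : j ≤ d) (h2d : 2 * d ≤ n) (hn : 1 ≤ n) :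
    |(if j ≤ k then (((n - j).choose (k - j) : ℕ) : ℝ) else 0)
        - (n.choose k : ℝ) * ((k : ℝ) / n) ^ j|
      ≤ (n.choose k : ℝ) * (2 * (d : ℝ) ^ 2 / n) := by
  have hn0 : (0 : ℝ) < n := by exact_mod_cast hn
  have hC0 : (0 : ℝ) ≤ (n.choose k : ℝ) := by positivity
  have hkn : (k : ℝ) ≤ (n : ℝ) := by exact_mod_cast hk
  have hk0 : (0 : ℝ) ≤ (k : ℝ) := by positivity
  by_cases hjk : j ≤ k
  · rw [if_pos hjk, ratio_eq hjk hk]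
    have hgj : ((k : ℝ) / n) ^ j = ∏ _i ∈ Finset.range j, ((k : ℝ) / n) := by
      rw [Finset.prod_const, Finset.card_range]
    rw [hgj, ← mul_sub, abs_mul, abs_of_nonneg hC0]
    apply mul_le_mul_of_nonneg_left _ hC0
    calc |(∏ i ∈ Finset.range j, (((k:ℝ) - i) / ((n:ℝ) - i)))
            - ∏ _i ∈ Finset.range j, ((k:ℝ) / n)|
        ≤ ∑ i ∈ Finset.range j, |((k:ℝ) - i) / ((n:ℝ) - i) - (k:ℝ) / n| := by
          apply prod_diff_bound
          · intro i hi
            have hij : i < j := Finset.mem_range.1 hi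
            have hik : (i : ℝ) ≤ (k : ℝ) := by
              exact_mod_cast Nat.le_of_lt_succ (by omega)
            have hni : (0:ℝ) < (n:ℝ) - i := by
              have : i < n := by omega
              have := (Nat.cast_lt (α := ℝ)).2 this
              linarith
            rw [abs_div, abs_of_nonneg (by linarith), abs_of_pos hni,
              div_le_one hni]
            have : (i : ℝ) ≥ 0 := by positivity
            linarith
          · intro i _
            rw [abs_div, abs_of_nonneg hk0, abs_of_pos hn0, div_le_one hn0]
            exact hkn
      _ ≤ ∑ _i ∈ Finset.range j, (2 * (j:ℝ) / n) := by
          apply Finset.sum_le_sum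
          intro i hi
          exact factor_bound (Finset.mem_range.1 hi) hjk hk (by omega)
      _ = (j : ℝ) * (2 * (j:ℝ) / n) := by
          rw [Finset.sum_const, Finset.card_range, nsmul_eq_mul]
      _ ≤ 2 * (d : ℝ) ^ 2 / n := by
          have hjd' : (j : ℝ) ≤ (d : ℝ) := by exact_mod_cast hjd
          have hj0 : (0 : ℝ) ≤ (j : ℝ) := by positivity
          have he : (j:ℝ) * (2 * (j:ℝ) / n) = 2 * (j:ℝ)^2 / n := by
            field_simp
          have hjj : (j:ℝ)^2 ≤ (d:ℝ)^2 := by nlinarith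
          rw [he, div_le_div_iff₀ hn0 hn0]
          nlinarith
  · rw [if_neg hjk, zero_sub, abs_neg, abs_of_nonneg (by positivity)]
    have hkj : k < j := by omega
    apply mul_le_mul_of_nonneg_left _ hC0
    rcases Nat.eq_zero_or_pos k with hk0' | hk0'
    · subst hk0'
      rw [Nat.cast_zero, zero_div, zero_pow (by omega)]
      positivity
    · have hj2 : 2 ≤ j := by omega
      have hkd : (k : ℝ) ≤ (d : ℝ) := by exact_mod_cast (by omega : k ≤ d)
      have hdiv1 : (k : ℝ) / n ≤ 1 := by
        rw [div_le_one hn0]; exact hkn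
      calc ((k:ℝ)/n) ^ j ≤ ((k:ℝ)/n) ^ 2 :=
            pow_le_pow_of_le_one (by positivity) hdiv1 hj2
        _ = (k:ℝ)^2 / (n:ℝ)^2 := by rw [div_pow]
        _ ≤ (d:ℝ)^2 / (n:ℝ) := by
            have hn1 : (1:ℝ) ≤ (n:ℝ) := by exact_mod_cast hn
            apply div_le_div₀ (by positivity) (by nlinarith) hn0 (by nlinarith)
        _ ≤ 2 * (d:ℝ)^2 / n := by
            rw [div_le_div_iff₀ hn0 hn0]
            nlinarith [sq_nonneg (d:ℝ), hn0.le]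

/-! ### Bernstein expansion identity -/

lemma bernstein_eval (q : ℝ[X]) (n : ℕ) (hn : q.natDegree ≤ n) (x : ℝ) :
    ∑ k ∈ Finset.range (n + 1),
        (∑ j ∈ Finset.range (q.natDegree + 1),
          if j ≤ k then q.coeff j * (((n - j).choose (k - j) : ℕ) : ℝ) else 0)
          * x ^ k * (1 - x) ^ (n - k)
      = q.eval x := by
  set d := q.natDegree with hd
  have step1 : ∀ k, (∑ j ∈ Finset.range (d + 1),
      if j ≤ k then q.coeff j * (((n - j).choose (k - j) : ℕ) : ℝ) else 0)
        * x ^ k * (1 - x) ^ (n - k)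
      = ∑ j ∈ Finset.range (d + 1),
        (if j ≤ k then q.coeff j * (((n - j).choose (k - j) : ℕ) : ℝ)
            * x ^ k * (1 - x) ^ (n - k) else 0) := by
    intro k
    rw [Finset.sum_mul, Finset.sum_mul]
    apply Finset.sum_congr rfl
    intro j _
    split_ifs with h
    · ring
    · simp
  calc ∑ k ∈ Finset.range (n + 1), (∑ j ∈ Finset.range (d + 1),
          if j ≤ k then q.coeff j * (((n - j).choose (k - j) : ℕ) : ℝ) else 0)
          * x ^ k * (1 - x) ^ (n - k)
      = ∑ k ∈ Finset.range (n + 1), ∑ j ∈ Finset.range (d + 1),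
          (if j ≤ k then q.coeff j * (((n - j).choose (k - j) : ℕ) : ℝ)
            * x ^ k * (1 - x) ^ (n - k) else 0) := by
        exact Finset.sum_congr rfl fun k _ => step1 k
    _ = ∑ j ∈ Finset.range (d + 1), ∑ k ∈ Finset.range (n + 1),
          (if j ≤ k then q.coeff j * (((n - j).choose (k - j) : ℕ) : ℝ)
            * x ^ k * (1 - x) ^ (n - k) else 0) := Finset.sum_comm
    _ = ∑ j ∈ Finset.range (d + 1), q.coeff j * x ^ j := by
        apply Finset.sum_congr rfl
        intro j hj
        have hjn : j ≤ n := le_trans (Nat.le_of_lt_succ (Finset.mem_range.1 hj)) hn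
        have hfilt : (Finset.range (n+1)).filter (fun k => j ≤ k) = Finset.Ico j (n+1) := by
          ext k
          simp only [Finset.mem_filter, Finset.mem_range, Finset.mem_Ico]
          omega
        rw [← Finset.sum_filter, hfilt, Finset.sum_Ico_eq_sum_range]
        have hrange : n + 1 - j = (n - j) + 1 := by omega
        rw [hrange]
        have hcong : ∀ i ∈ Finset.range ((n-j)+1),
            q.coeff j * (((n - j).choose ((j + i) - j) : ℕ) : ℝ) * x ^ (j + i)
              * (1 - x) ^ (n - (j + i))
            = q.coeff j * x ^ j
              * ((x : ℝ) ^ i * (1-x) ^ ((n-j) - i) * (((n-j).choose i : ℕ) : ℝ)) := by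
          intro i hi
          have h1 : (j + i) - j = i := by omega
          have h2 : n - (j + i) = (n - j) - i := by omega
          rw [h1, h2, pow_add]
          ring
        rw [Finset.sum_congr rfl hcong, ← Finset.mul_sum, ← add_pow]
        have hx1 : x + (1 - x) = 1 := by ring
        rw [hx1, one_pow, mul_one]
    _ = q.eval x := (Polynomial.eval_eq_sum_range (x := x)).symm

/-! ### Bernstein positivity theorem -/

theorem bernstein_pos {q : ℝ[X]} (hq : ∀ x ∈ Set.Icc (0:ℝ) 1, 0 < q.eval x) :
    ∃ n, Bcone n q := by
  classical
  set d := q.natDegree with hd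
  obtain ⟨x₀, hx₀, hmin⟩ := isCompact_Icc.exists_isMinOn (Set.nonempty_Icc.2 zero_le_one)
    (Polynomial.continuous q).continuousOn
  set δ := q.eval x₀ with hδdef
  have hδ : 0 < δ := hq x₀ hx₀
  set A := ∑ j ∈ Finset.range (d + 1), |q.coeff j| with hA
  have hA0 : 0 ≤ A := Finset.sum_nonneg fun j _ => abs_nonneg _
  obtain ⟨n₀, hn₀⟩ := exists_nat_gt (2 * A * (d : ℝ) ^ 2 / δ)
  set n := n₀ + 2 * d + 1 with hn
  have hdn : d ≤ n := by omega
  have h2d : 2 * d ≤ n := by omega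
  have hn1 : 1 ≤ n := by omega
  have hn0 : (0:ℝ) < (n:ℝ) := by exact_mod_cast hn1
  have hkey : 2 * A * (d : ℝ) ^ 2 / n < δ := by
    have hnn : (n₀ : ℝ) ≤ (n : ℝ) := by exact_mod_cast (by omega : n₀ ≤ n)
    have h1 : 2 * A * (d : ℝ) ^ 2 / δ < (n : ℝ) := lt_of_lt_of_le hn₀ hnn
    rw [div_lt_iff₀ hn0]
    rw [div_lt_iff₀ hδ] at h1
    linarith
  set e : ℕ → ℝ := fun k => ∑ j ∈ Finset.range (d + 1),
    if j ≤ k then q.coeff j * (((n - j).choose (k - j) : ℕ) : ℝ) else 0 with he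
  have hek : ∀ k ∈ Finset.range (n + 1), 0 ≤ e k := by
    intro k hk
    have hkn : k ≤ n := Nat.lt_succ_iff.1 (Finset.mem_range.1 hk)
    have hC0 : (0:ℝ) ≤ (n.choose k : ℝ) := by positivity
    have hmem : (k : ℝ) / n ∈ Set.Icc (0:ℝ) 1 := by
      constructor
      · positivity
      · rw [div_le_one hn0]; exact_mod_cast hkn
    have hqk : δ ≤ q.eval ((k:ℝ)/n) := hmin hmem
    have heval : q.eval ((k:ℝ)/n) = ∑ j ∈ Finset.range (d + 1),
        q.coeff j * ((k:ℝ)/n) ^ j := Polynomial.eval_eq_sum_range _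
    have hdiff : |e k - (n.choose k : ℝ) * q.eval ((k:ℝ)/n)|
        ≤ A * ((n.choose k : ℝ) * (2 * (d:ℝ)^2 / n)) := by
      rw [heval, Finset.mul_sum, he]
      simp only []
      rw [← Finset.sum_sub_distrib]
      calc |∑ j ∈ Finset.range (d + 1),
              ((if j ≤ k then q.coeff j * (((n - j).choose (k - j) : ℕ) : ℝ) else 0)
                - (n.choose k : ℝ) * (q.coeff j * ((k:ℝ)/n) ^ j))|
          ≤ ∑ j ∈ Finset.range (d + 1),
              |(if j ≤ k then q.coeff j * (((n - j).choose (k - j) : ℕ) : ℝ) else 0)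
                - (n.choose k : ℝ) * (q.coeff j * ((k:ℝ)/n) ^ j)| :=
            Finset.abs_sum_le_sum_abs _ _
        _ ≤ ∑ j ∈ Finset.range (d + 1),
              |q.coeff j| * ((n.choose k : ℝ) * (2 * (d:ℝ)^2 / n)) := by
            apply Finset.sum_le_sum
            intro j hj
            have hjd : j ≤ d := Nat.lt_succ_iff.1 (Finset.mem_range.1 hj)
            have hsplit : (if j ≤ k then q.coeff j * (((n - j).choose (k - j) : ℕ) : ℝ) else 0)
                = q.coeff j * (if j ≤ k then (((n - j).choose (k - j) : ℕ) : ℝ) else 0) := by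
              split_ifs <;> simp
            rw [hsplit]
            have : q.coeff j * (if j ≤ k then (((n - j).choose (k - j) : ℕ) : ℝ) else 0)
                - (n.choose k : ℝ) * (q.coeff j * ((k:ℝ)/n) ^ j)
                = q.coeff j * ((if j ≤ k then (((n - j).choose (k - j) : ℕ) : ℝ) else 0)
                  - (n.choose k : ℝ) * ((k:ℝ)/n) ^ j) := by ring
            rw [this, abs_mul]
            exact mul_le_mul_of_nonneg_left (rho_bound hkn hjd h2d hn1) (abs_nonneg _)
        _ = A * ((n.choose k : ℝ) * (2 * (d:ℝ)^2 / n)) := by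
            rw [← Finset.sum_mul]
    have hlow : (n.choose k : ℝ) * q.eval ((k:ℝ)/n)
        - A * ((n.choose k : ℝ) * (2 * (d:ℝ)^2 / n)) ≤ e k := by
      have := abs_le.1 hdiff
      linarith [this.1]
    calc (0:ℝ) ≤ (n.choose k : ℝ) * (δ - 2 * A * (d:ℝ)^2 / n) := by
          apply mul_nonneg hC0
          linarith
      _ ≤ (n.choose k : ℝ) * q.eval ((k:ℝ)/n) - A * ((n.choose k : ℝ) * (2 * (d:ℝ)^2 / n)) := by
          have h2 : (n.choose k : ℝ) * (2 * A * (d:ℝ)^2 / n)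
              = A * ((n.choose k : ℝ) * (2 * (d:ℝ)^2 / n)) := by ring
          nlinarith [mul_le_mul_of_nonneg_left hqk hC0]
      _ ≤ e k := hlow
  refine ⟨n, ?_⟩
  have hrep : q = ∑ k ∈ Finset.range (n + 1), C (e k) * X ^ k * (1 - X) ^ (n - k) := by
    apply Polynomial.funext
    intro x
    rw [eval_finset_sum]
    simp only [eval_mul, eval_pow, eval_C, eval_X, eval_sub, eval_one]
    exact (bernstein_eval q n hdn x).symm
  rw [hrep]
  apply Bcone_sum
  intro k hk
  have hkn : k ≤ n := Nat.lt_succ_iff.1 (Finset.mem_range.1 hk)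
  have hsingle := Bcone_single (i := k) (j := n - k) (hek k hk)
  rwa [Nat.add_sub_cancel' hkn] at hsingle


lemma Matrix.IsHermitian.star_mul_self_mul_eq_diagonal {s : ℕ} {A : Matrix (Fin s) (Fin s) ℂ}
    (hA : A.IsHermitian) :
    star (hA.eigenvectorUnitary : Matrix (Fin s) (Fin s) ℂ) * A
      * (hA.eigenvectorUnitary : Matrix (Fin s) (Fin s) ℂ)
      = Matrix.diagonal (RCLike.ofReal ∘ hA.eigenvalues) := by
  have := hA.conjStarAlgAut_star_eigenvectorUnitary
  rwa [Unitary.conjStarAlgAut_star_apply] at this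

section MatrixPart
open Matrix
open scoped ComplexOrder

lemma min_zero_eq (a : ℝ) : min a 0 = a - max a 0 := by
  rcases le_total a 0 with h | h
  · rw [min_eq_left h, max_eq_right h]; ring
  · rw [min_eq_right h, max_eq_left h]; ring

/-- Master transfer lemma: if `A = W₁ D W₁*` with real diagonal `d`, and the diagonal
entries of `W₂* A W₂` are the reals `e j`, then for any convex `g`,
`∑ g (e j) ≤ ∑ g (d i)`. -/
lemma jensen_transfer {s : ℕ} {A : Matrix (Fin s) (Fin s) ℂ}
    (W₁ W₂ : Matrix.unitaryGroup (Fin s) ℂ) (d e : Fin s → ℝ)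
    (h1 : A = (W₁ : Matrix (Fin s) (Fin s) ℂ) * Matrix.diagonal (Complex.ofReal ∘ d)
      * star (W₁ : Matrix (Fin s) (Fin s) ℂ))
    (h2 : ∀ j, (star (W₂ : Matrix (Fin s) (Fin s) ℂ) * A
      * (W₂ : Matrix (Fin s) (Fin s) ℂ)) j j = (e j : ℂ))
    {g : ℝ → ℝ} (hg : ConvexOn ℝ Set.univ g) :
    ∑ j, g (e j) ≤ ∑ i, g (d i) := by
  classical
  set P : Matrix (Fin s) (Fin s) ℂ := star (W₂ : Matrix (Fin s) (Fin s) ℂ) * W₁ with hP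
  have hW₁ : star (W₁ : Matrix (Fin s) (Fin s) ℂ) * W₁ = 1 :=
    Matrix.mem_unitaryGroup_iff'.mp W₁.2
  have hW₁' : (W₁ : Matrix (Fin s) (Fin s) ℂ) * star (W₁ : Matrix (Fin s) (Fin s) ℂ) = 1 :=
    Matrix.mem_unitaryGroup_iff.mp W₁.2
  have hW₂ : star (W₂ : Matrix (Fin s) (Fin s) ℂ) * W₂ = 1 :=
    Matrix.mem_unitaryGroup_iff'.mp W₂.2
  have hW₂' : (W₂ : Matrix (Fin s) (Fin s) ℂ) * star (W₂ : Matrix (Fin s) (Fin s) ℂ) = 1 :=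
    Matrix.mem_unitaryGroup_iff.mp W₂.2
  have hPP : P * star P = 1 := by
    rw [hP, StarMul.star_mul, star_star]
    calc star (W₂ : Matrix (Fin s) (Fin s) ℂ) * W₁
          * (star (W₁ : Matrix (Fin s) (Fin s) ℂ) * W₂)
        = star (W₂ : Matrix (Fin s) (Fin s) ℂ)
          * ((W₁ : Matrix (Fin s) (Fin s) ℂ) * star (W₁ : Matrix (Fin s) (Fin s) ℂ))
          * (W₂ : Matrix (Fin s) (Fin s) ℂ) := by
          noncomm_ring
      _ = 1 := by rw [hW₁', mul_one, hW₂]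
  have hPP' : star P * P = 1 := by
    rw [hP, StarMul.star_mul, star_star]
    calc star (W₁ : Matrix (Fin s) (Fin s) ℂ) * W₂
          * (star (W₂ : Matrix (Fin s) (Fin s) ℂ) * W₁)
        = star (W₁ : Matrix (Fin s) (Fin s) ℂ)
          * ((W₂ : Matrix (Fin s) (Fin s) ℂ) * star (W₂ : Matrix (Fin s) (Fin s) ℂ))
          * (W₁ : Matrix (Fin s) (Fin s) ℂ) := by
          noncomm_ring
      _ = 1 := by rw [hW₂', mul_one, hW₁]
  set w : Fin s → Fin s → ℝ := fun j i => Complex.normSq (P j i) with hw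
  have hw0 : ∀ j i, 0 ≤ w j i := fun j i => Complex.normSq_nonneg _
  -- row sums
  have hrow : ∀ j, ∑ i, w j i = 1 := by
    intro j
    have := congrFun (congrFun hPP j) j
    rw [Matrix.mul_apply, Matrix.one_apply_eq] at this
    have h2' : ∑ i, (w j i : ℂ) = 1 := by
      rw [← this]
      apply Finset.sum_congr rfl
      intro i _
      rw [Matrix.star_apply, hw]
      exact (Complex.mul_conj (P j i)).symm ▸ rfl
    exact_mod_cast h2'
  -- column sums
  have hcol : ∀ i, ∑ j, w j i = 1 := by
    intro i
    have := congrFun (congrFun hPP' i) i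
    rw [Matrix.mul_apply, Matrix.one_apply_eq] at this
    have h2' : ∑ j, (w j i : ℂ) = 1 := by
      rw [← this]
      apply Finset.sum_congr rfl
      intro j _
      rw [Matrix.star_apply, hw]
      rw [mul_comm]
      exact (Complex.mul_conj (P j i)).symm ▸ rfl
    exact_mod_cast h2'
  -- e j = ∑ i, w j i * d i
  have hkey : ∀ j, e j = ∑ i, w j i * d i := by
    intro j
    have hW2A : star (W₂ : Matrix (Fin s) (Fin s) ℂ) * A * (W₂ : Matrix (Fin s) (Fin s) ℂ)
        = P * Matrix.diagonal (Complex.ofReal ∘ d) * star P := by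
      rw [h1, hP, StarMul.star_mul, star_star]
      noncomm_ring
    have := h2 j
    rw [hW2A] at this
    have hentry : (P * Matrix.diagonal (Complex.ofReal ∘ d) * star P) j j
        = ∑ i, ((w j i * d i : ℝ) : ℂ) := by
      rw [Matrix.mul_apply]
      apply Finset.sum_congr rfl
      intro i _
      rw [Matrix.mul_diagonal, Matrix.star_apply]
      push_cast
      rw [hw]
      have : (Complex.normSq (P j i) : ℂ) = P j i * (starRingEnd ℂ) (P j i) :=
        (Complex.mul_conj (P j i)).symm
      rw [this]
      simp only [Function.comp_apply, Complex.star_def]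
      ring
    rw [hentry, ← Complex.ofReal_sum] at this
    exact_mod_cast this.symm
  -- Jensen
  calc ∑ j, g (e j) = ∑ j, g (∑ i, w j i • d i) := by
        apply Finset.sum_congr rfl
        intro j _
        rw [hkey j]
        simp [smul_eq_mul]
    _ ≤ ∑ j, ∑ i, w j i • g (d i) := by
        apply Finset.sum_le_sum
        intro j _
        exact hg.map_sum_le (fun i _ => hw0 j i) (hrow j) (fun i _ => Set.mem_univ _)
    _ = ∑ i, (∑ j, w j i) * g (d i) := by
        rw [Finset.sum_comm]
        apply Finset.sum_congr rfl
        intro i _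
        rw [Finset.sum_mul]
        simp [smul_eq_mul]
    _ = ∑ i, g (d i) := by
        apply Finset.sum_congr rfl
        intro i _
        rw [hcol i, one_mul]

lemma psd_diag_nonneg {s : ℕ} {N : Matrix (Fin s) (Fin s) ℂ} (hN : N.PosSemidef)
    (j : Fin s) : (0 : ℂ) ≤ N j j := by
  exact hN.diag_nonneg

lemma psd_diag_eq_re {s : ℕ} {N : Matrix (Fin s) (Fin s) ℂ} (hN : N.PosSemidef)
    (j : Fin s) : N j j = ((N j j).re : ℂ) ∧ 0 ≤ (N j j).re := by
  have h := psd_diag_nonneg hN j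
  rw [Complex.le_def] at h
  simp only [Complex.zero_re, Complex.zero_im] at h
  exact ⟨Complex.ext rfl h.2.symm, h.1⟩

/-- Lower bound: for any psd `N`, `∑ negPart p (λᵢ(M)) ≤ ∑ |λⱼ(M-N)|^p`. -/
lemma lower_bound {s p : ℕ} (hp : 1 ≤ p) {M N : Matrix (Fin s) (Fin s) ℂ}
    (hM : M.IsHermitian) (hN : N.PosSemidef) :
    ∑ i, negPart p (hM.eigenvalues i)
      ≤ ∑ j, |(hM.sub hN.isHermitian).eigenvalues j| ^ p := by
  classical
  set hA := hM.sub hN.isHermitian with hAdef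
  set V := hM.eigenvectorUnitary with hV
  set NV := star (V : Matrix (Fin s) (Fin s) ℂ) * N * (V : Matrix (Fin s) (Fin s) ℂ) with hNV
  have hNVpsd : NV.PosSemidef := by
    rw [hNV, Matrix.star_eq_conjTranspose (V : Matrix (Fin s) (Fin s) ℂ)]
    exact hN.conjTranspose_mul_mul_same _
  set r : Fin s → ℝ := fun j => (NV j j).re with hr
  have hr0 : ∀ j, 0 ≤ r j := fun j => (psd_diag_eq_re hNVpsd j).2
  have hrc : ∀ j, NV j j = ((r j : ℝ) : ℂ) := fun j => (psd_diag_eq_re hNVpsd j).1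
  have h2 : ∀ j, (star (V : Matrix (Fin s) (Fin s) ℂ) * (M - N)
      * (V : Matrix (Fin s) (Fin s) ℂ)) j j = ((hM.eigenvalues j - r j : ℝ) : ℂ) := by
    intro j
    have hsplit : star (V : Matrix (Fin s) (Fin s) ℂ) * (M - N) * (V : Matrix (Fin s) (Fin s) ℂ)
        = Matrix.diagonal (RCLike.ofReal ∘ hM.eigenvalues) - NV := by
      rw [← hM.star_mul_self_mul_eq_diagonal, hNV]
      noncomm_ring
    rw [hsplit, Matrix.sub_apply, Matrix.diagonal_apply_eq, hrc j]
    push_cast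
    rfl
  have hjen := jensen_transfer (A := M - N) hA.eigenvectorUnitary V hA.eigenvalues
    (fun j => hM.eigenvalues j - r j) hA.spectral_theorem h2
    (convexOn_negPart hp)
  calc ∑ i, negPart p (hM.eigenvalues i)
      ≤ ∑ j, negPart p (hM.eigenvalues j - r j) := by
        apply Finset.sum_le_sum
        intro j _
        exact np_antitone hp (by linarith [hr0 j])
    _ ≤ ∑ i, negPart p (hA.eigenvalues i) := hjen
    _ ≤ ∑ j, |hA.eigenvalues j| ^ p := by
        apply Finset.sum_le_sum
        intro j _
        exact np_le_abs_pow hp _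

/-- Upper bound: there is a psd `N` with `∑ |λⱼ(M-N)|^p ≤ ∑ negPart p (λᵢ(M))`. -/
lemma upper_bound {s p : ℕ} (hp : 1 ≤ p) {M : Matrix (Fin s) (Fin s) ℂ}
    (hM : M.IsHermitian) :
    ∃ (N : Matrix (Fin s) (Fin s) ℂ) (hN : N.PosSemidef),
      ∑ j, |(hM.sub hN.isHermitian).eigenvalues j| ^ p
        ≤ ∑ i, negPart p (hM.eigenvalues i) := by
  classical
  set U := hM.eigenvectorUnitary with hU
  set dpos : Fin s → ℝ := fun i => max (hM.eigenvalues i) 0 with hdpos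
  set dneg : Fin s → ℝ := fun i => min (hM.eigenvalues i) 0 with hdneg
  set N : Matrix (Fin s) (Fin s) ℂ := (U : Matrix (Fin s) (Fin s) ℂ)
    * Matrix.diagonal (RCLike.ofReal ∘ dpos) * star (U : Matrix (Fin s) (Fin s) ℂ) with hNdef
  have hdiagpsd : (Matrix.diagonal ((RCLike.ofReal : ℝ → ℂ) ∘ dpos)).PosSemidef := by
    rw [Matrix.posSemidef_diagonal_iff]
    intro i
    have h0 : (0:ℝ) ≤ dpos i := by rw [hdpos]; exact le_max_right _ _
    rw [Function.comp_apply]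
    exact Complex.zero_le_real.2 h0
  have hN : N.PosSemidef := by
    rw [hNdef, Matrix.star_eq_conjTranspose (U : Matrix (Fin s) (Fin s) ℂ)]
    exact hdiagpsd.mul_mul_conjTranspose_same _
  refine ⟨N, hN, ?_⟩
  set hA := hM.sub hN.isHermitian with hAdef
  have h1 : M - N = (U : Matrix (Fin s) (Fin s) ℂ)
      * Matrix.diagonal (RCLike.ofReal ∘ dneg) * star (U : Matrix (Fin s) (Fin s) ℂ) := by
    have hspec := hM.spectral_theorem
    simp only [Unitary.conjStarAlgAut_apply, Unitary.coe_star] at hspec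
    rw [hNdef]
    nth_rewrite 1 [hspec]
    rw [← Matrix.sub_mul, ← Matrix.mul_sub, Matrix.diagonal_sub]
    have hfun : (fun i => (RCLike.ofReal ∘ hM.eigenvalues) i - (RCLike.ofReal ∘ dpos) i)
        = ((RCLike.ofReal ∘ dneg) : Fin s → ℂ) := by
      funext i
      show RCLike.ofReal (hM.eigenvalues i) - RCLike.ofReal (dpos i)
        = (RCLike.ofReal (dneg i) : ℂ)
      have h1' : dpos i = max (hM.eigenvalues i) 0 := by rw [hdpos]
      have h2' : dneg i = min (hM.eigenvalues i) 0 := by rw [hdneg]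
      rw [h1', h2', min_zero_eq]
      push_cast
      ring
    rw [hfun]
  have h2 : ∀ j, (star (hA.eigenvectorUnitary : Matrix (Fin s) (Fin s) ℂ) * (M - N)
      * (hA.eigenvectorUnitary : Matrix (Fin s) (Fin s) ℂ)) j j
      = ((hA.eigenvalues j : ℝ) : ℂ) := by
    intro j
    rw [hA.star_mul_self_mul_eq_diagonal]
    exact Matrix.diagonal_apply_eq _ j
  have hjen := jensen_transfer (A := M - N) U hA.eigenvectorUnitary dneg
    hA.eigenvalues h1 h2 (convexOn_abs_pow p)
  refine le_trans hjen ?_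
  apply le_of_eq
  apply Finset.sum_congr rfl
  intro i _
  have h2' : dneg i = min (hM.eigenvalues i) 0 := by rw [hdneg]
  rw [h2']
  unfold _root_.negPart
  split_ifs with h
  · rw [min_eq_left (le_of_lt h)]
  · rw [min_eq_right (not_lt.1 h), abs_zero, zero_pow (by omega)]

end MatrixPart

/-! ### Handelman certificates -/

lemma handel_cert {p m : ℕ} {q : ℝ[X]} (h2 : Bcone m q)
    (h1 : Bcone m ((q - (- X) ^ p).comp (- X))) :
    ∃ b c : ℕ × ℕ → ℝ, (∀ α, 0 ≤ b α) ∧ (∀ α, 0 ≤ c α) ∧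
      (∀ α : ℕ × ℕ, m < α.1 + α.2 → b α = 0) ∧ (∀ α : ℕ × ℕ, m < α.1 + α.2 → c α = 0) ∧
      q = (-X) ^ p + ∑ α ∈ Finset.range (m + 1) ×ˢ Finset.range (m + 1),
            C (b α) * (-X) ^ α.1 * (1 + X) ^ α.2 ∧
      q = ∑ α ∈ Finset.range (m + 1) ×ˢ Finset.range (m + 1),
            C (c α) * X ^ α.1 * (1 - X) ^ α.2 := by
  obtain ⟨c, hc0, hcv, hcrep⟩ := h2
  obtain ⟨b, hb0, hbv, hbrep⟩ := h1
  refine ⟨b, c, hb0, hc0, hbv, hcv, ?_, hcrep⟩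
  have hkey := congrArg (fun r : ℝ[X] => r.comp (- X)) hbrep
  rw [Polynomial.comp_assoc] at hkey
  have hXX : ((- X : ℝ[X]).comp (- X)) = X := by
    rw [Polynomial.neg_comp, Polynomial.X_comp, neg_neg]
  rw [hXX, Polynomial.comp_X, Polynomial.sum_comp] at hkey
  have hterm : ∀ α : ℕ × ℕ,
      ((C (b α) * X ^ α.1 * (1 - X) ^ α.2).comp (- X) : ℝ[X])
        = C (b α) * (- X) ^ α.1 * (1 + X) ^ α.2 := by
    intro α
    rw [Polynomial.mul_comp, Polynomial.mul_comp, Polynomial.C_comp, Polynomial.pow_comp,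
      Polynomial.pow_comp, Polynomial.X_comp, Polynomial.sub_comp, Polynomial.one_comp,
      Polynomial.X_comp]
    ring_nf
  rw [Finset.sum_congr rfl (fun α _ => hterm α)] at hkey
  exact sub_eq_iff_eq_add'.1 hkey

/-- the base certificate polynomial `((1-x)/2)^p`. -/
def q0 (p : ℕ) : ℝ[X] := C ((2:ℝ)⁻¹ ^ p) * X ^ 0 * (1 - X) ^ p

lemma q0_eval (p : ℕ) (x : ℝ) : (q0 p).eval x = ((1 - x) / 2) ^ p := by
  simp only [q0, eval_mul, eval_pow, eval_C, eval_X, eval_sub, eval_one, pow_zero, mul_one]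
  rw [div_pow]
  field_simp
  rw [mul_right_comm, ← mul_pow]; norm_num

lemma q0_Bcone (p : ℕ) : Bcone p (q0 p) := by
  have := Bcone_single (i := 0) (j := p) (a := (2:ℝ)⁻¹ ^ p) (by positivity)
  simpa [q0] using this

lemma q0_Bcone_neg {p : ℕ} (hp : 1 ≤ p) :
    Bcone p ((q0 p - (- X) ^ p).comp (- X)) := by
  have hrep : ((q0 p - (- X) ^ p).comp (- X) : ℝ[X])
      = ∑ k ∈ Finset.range p,
          C ((2:ℝ)⁻¹ ^ p * 2 ^ k * (p.choose k : ℝ)) * X ^ k * (1 - X) ^ (p - k) := by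
    apply Polynomial.funext
    intro x
    rw [Polynomial.eval_comp]
    simp only [eval_sub, eval_pow, eval_neg, eval_X, q0_eval, eval_finset_sum, eval_mul, eval_C,
      eval_one]
    rw [neg_neg]
    have hadd : ((1:ℝ) + x) ^ p
        = ∑ k ∈ Finset.range (p + 1), (2*x) ^ k * (1 - x) ^ (p - k) * (p.choose k : ℝ) := by
      rw [← add_pow]
      ring_nf
    have hq : ((1 - -x) / 2) ^ p = (2:ℝ)⁻¹ ^ p * (1 + x) ^ p := by
      rw [div_pow]
      have : ((1:ℝ) - -x) = 1 + x := by ring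
      rw [this]
      field_simp
      rw [mul_assoc, ← mul_pow]; norm_num
    have hlast : (2:ℝ)⁻¹ ^ p * ((2*x) ^ p * (1 - x) ^ (p - p) * (p.choose p : ℝ)) = x ^ p := by
      rw [Nat.sub_self, pow_zero, Nat.choose_self, Nat.cast_one, mul_one, mul_one, ← mul_pow]
      congr 1
      ring
    rw [hq, hadd, Finset.mul_sum, Finset.sum_range_succ, hlast, add_sub_cancel_right]
    apply Finset.sum_congr rfl
    intro k _
    rw [mul_pow]
    ring
  rw [hrep]
  apply Bcone_sum
  intro k hk
  have hkp : k ≤ p := le_of_lt (Finset.mem_range.1 hk)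
  have := Bcone_single (i := k) (j := p - k)
    (a := (2:ℝ)⁻¹ ^ p * 2 ^ k * (p.choose k : ℝ)) (by positivity)
  rwa [Nat.add_sub_cancel' hkp] at this

/-! ### Original definitions -/

open scoped ComplexOrder

/-- The normalized trace of `f(M)` for a Hermitian matrix `M`, defined spectrally:
`tr(f(M)) = s⁻¹ ∑ᵢ f(λᵢ)`. -/
def trFun {s : ℕ} {M : Matrix (Fin s) (Fin s) ℂ} (hM : M.IsHermitian)
    (f : ℝ → ℝ) : ℝ := (s : ℝ)⁻¹ * ∑ i, f (hM.eigenvalues i)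

/-- The normalized Schatten p-norm of a Hermitian matrix:
`‖M‖_p = (s⁻¹ ∑ᵢ |λᵢ|^p)^(1/p)`. -/
def schattenNorm {s : ℕ} (p : ℝ) {M : Matrix (Fin s) (Fin s) ℂ}
    (hM : M.IsHermitian) : ℝ :=
  ((s : ℝ)⁻¹ * ∑ i, |hM.eigenvalues i| ^ p) ^ (1 / p)

/-- The distance of a Hermitian matrix to the psd cone in normalized Schatten p-norm. -/
def distPSD {s : ℕ} (p : ℝ) {M : Matrix (Fin s) (Fin s) ℂ}
    (hM : M.IsHermitian) : ℝ :=
  sInf { r : ℝ | ∃ (N : Matrix (Fin s) (Fin s) ℂ) (hN : N.PosSemidef),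
    r = schattenNorm p (hM.sub hN.isHermitian) }

/-! ### Glue lemmas -/

lemma trFun_nonneg {s : ℕ} {M : Matrix (Fin s) (Fin s) ℂ} (hM : M.IsHermitian)
    {f : ℝ → ℝ} (hf : ∀ i, 0 ≤ f (hM.eigenvalues i)) : 0 ≤ trFun hM f :=
  mul_nonneg (by positivity) (Finset.sum_nonneg fun i _ => hf i)

lemma trFun_mono {s : ℕ} {M : Matrix (Fin s) (Fin s) ℂ} (hM : M.IsHermitian)
    {f g : ℝ → ℝ} (h : ∀ i, f (hM.eigenvalues i) ≤ g (hM.eigenvalues i)) :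
    trFun hM f ≤ trFun hM g :=
  mul_le_mul_of_nonneg_left (Finset.sum_le_sum fun i _ => h i) (by positivity)

lemma trFun_le_add_const {s : ℕ} {M : Matrix (Fin s) (Fin s) ℂ} (hM : M.IsHermitian)
    {f g : ℝ → ℝ} {c : ℝ} (hc : 0 ≤ c)
    (h : ∀ i, f (hM.eigenvalues i) ≤ g (hM.eigenvalues i) + c) :
    trFun hM f ≤ trFun hM g + c := by
  unfold trFun
  have hss : (s:ℝ)⁻¹ * (s:ℝ) ≤ 1 := by
    rcases Nat.eq_zero_or_pos s with h0 | h0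
    · subst h0; norm_num
    · rw [inv_mul_cancel₀ (Nat.cast_ne_zero.2 h0.ne')]
  calc (s:ℝ)⁻¹ * ∑ i, f (hM.eigenvalues i)
      ≤ (s:ℝ)⁻¹ * ∑ i, (g (hM.eigenvalues i) + c) :=
        mul_le_mul_of_nonneg_left (Finset.sum_le_sum fun i _ => h i) (by positivity)
    _ = (s:ℝ)⁻¹ * ∑ i, g (hM.eigenvalues i) + ((s:ℝ)⁻¹ * (s:ℝ)) * c := by
        rw [Finset.sum_add_distrib, mul_add, Finset.sum_const, Finset.card_univ,
          Fintype.card_fin, nsmul_eq_mul]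
        ring
    _ ≤ (s:ℝ)⁻¹ * ∑ i, g (hM.eigenvalues i) + c := by
        have : ((s:ℝ)⁻¹ * (s:ℝ)) * c ≤ 1 * c := mul_le_mul_of_nonneg_right hss hc
        linarith

lemma distPSD_eq {s p : ℕ} (hp : 1 ≤ p) {M : Matrix (Fin s) (Fin s) ℂ}
    (hM : M.IsHermitian) :
    distPSD (p:ℝ) hM = (trFun hM (_root_.negPart p)) ^ (1/(p:ℝ)) := by
  have hp0 : (0:ℝ) < (p:ℝ) := by exact_mod_cast hp
  have hinv : (0:ℝ) < 1/(p:ℝ) := by positivity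
  have hsch : ∀ (N : Matrix (Fin s) (Fin s) ℂ) (hN : N.PosSemidef),
      schattenNorm (p:ℝ) (hM.sub hN.isHermitian)
        = ((s:ℝ)⁻¹ * ∑ j, |(hM.sub hN.isHermitian).eigenvalues j| ^ p) ^ (1/(p:ℝ)) := by
    intro N hN
    unfold schattenNorm
    congr 2
    apply Finset.sum_congr rfl
    intro j _
    exact Real.rpow_natCast _ p
  have hbase : ∀ (N : Matrix (Fin s) (Fin s) ℂ) (hN : N.PosSemidef),
      (0:ℝ) ≤ (s:ℝ)⁻¹ * ∑ j, |(hM.sub hN.isHermitian).eigenvalues j| ^ p := by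
    intro N hN
    positivity
  have hbdd : BddBelow { r : ℝ | ∃ (N : Matrix (Fin s) (Fin s) ℂ) (hN : N.PosSemidef),
      r = schattenNorm (p:ℝ) (hM.sub hN.isHermitian) } := by
    refine ⟨0, ?_⟩
    rintro r ⟨N, hN, rfl⟩
    rw [hsch N hN]
    exact Real.rpow_nonneg (hbase N hN) _
  have hF0 : (0:ℝ) ≤ trFun hM (_root_.negPart p) := trFun_nonneg hM fun i => np_nonneg hp _
  obtain ⟨N₀, hN₀, hle⟩ := upper_bound hp hM
  apply le_antisymm
  · calc distPSD (p:ℝ) hM ≤ schattenNorm (p:ℝ) (hM.sub hN₀.isHermitian) :=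
        csInf_le hbdd ⟨N₀, hN₀, rfl⟩
      _ ≤ (trFun hM (_root_.negPart p)) ^ (1/(p:ℝ)) := by
          rw [hsch N₀ hN₀]
          apply Real.rpow_le_rpow (hbase N₀ hN₀) _ hinv.le
          exact mul_le_mul_of_nonneg_left hle (by positivity)
  · refine le_csInf ?_ ?_
    · exact ⟨_, ⟨N₀, hN₀, rfl⟩⟩
    rintro r ⟨N, hN, rfl⟩
    rw [hsch N hN]
    apply Real.rpow_le_rpow hF0 _ hinv.le
    exact mul_le_mul_of_nonneg_left (lower_bound hp hM hN) (by positivity)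

lemma q0_ge {p : ℕ} (hp : 1 ≤ p) :
    ∀ x ∈ Set.Icc (-1:ℝ) 1, negPart p x ≤ (q0 p).eval x := by
  intro x hx
  rw [q0_eval, np_eq' hp]
  apply pow_le_pow_left₀ (le_max_right _ _)
  apply max_le
  · linarith [hx.1]
  · linarith [hx.2]

lemma cert_eval_ge {p m : ℕ} (hp : 1 ≤ p) {q : ℝ[X]} {b c : ℕ × ℕ → ℝ}
    (hb0 : ∀ α, 0 ≤ b α) (hc0 : ∀ α, 0 ≤ c α)
    (hbrep : q = (-X) ^ p + ∑ α ∈ Finset.range (m + 1) ×ˢ Finset.range (m + 1),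
      C (b α) * (-X) ^ α.1 * (1 + X) ^ α.2)
    (hcrep : q = ∑ α ∈ Finset.range (m + 1) ×ˢ Finset.range (m + 1),
      C (c α) * X ^ α.1 * (1 - X) ^ α.2) :
    ∀ x ∈ Set.Icc (-1:ℝ) 1, negPart p x ≤ q.eval x := by
  intro x hx
  rcases le_total x 0 with h | h
  · have hev : q.eval x = (-x) ^ p + ∑ α ∈ Finset.range (m + 1) ×ˢ Finset.range (m + 1),
        b α * (-x) ^ α.1 * (1 + x) ^ α.2 := by
      rw [hbrep, eval_add, eval_pow, eval_neg, eval_X, eval_finset_sum]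
      congr 1
      apply Finset.sum_congr rfl
      intro α _
      simp [eval_mul, eval_pow, eval_neg, eval_X, eval_add, eval_one, eval_C]
    rw [hev]
    have h1 : negPart p x ≤ (-x) ^ p := by
      rw [np_eq' hp, max_eq_left (by linarith)]
    have h2 : 0 ≤ ∑ α ∈ Finset.range (m + 1) ×ˢ Finset.range (m + 1),
        b α * (-x) ^ α.1 * (1 + x) ^ α.2 := by
      apply Finset.sum_nonneg
      intro α _
      have hx1 : (0:ℝ) ≤ -x := by linarith
      have hx2 : (0:ℝ) ≤ 1 + x := by linarith [hx.1]
      exact mul_nonneg (mul_nonneg (hb0 α) (pow_nonneg hx1 _)) (pow_nonneg hx2 _)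
    linarith
  · have hev : q.eval x = ∑ α ∈ Finset.range (m + 1) ×ˢ Finset.range (m + 1),
        c α * x ^ α.1 * (1 - x) ^ α.2 := by
      rw [hcrep, eval_finset_sum]
      apply Finset.sum_congr rfl
      intro α _
      simp [eval_mul, eval_pow, eval_X, eval_sub, eval_one, eval_C]
    rw [np_eq' hp, max_eq_right (by linarith), zero_pow (by omega), hev]
    apply Finset.sum_nonneg
    intro α _
    have hx2 : (0:ℝ) ≤ 1 - x := by linarith [hx.2]
    exact mul_nonneg (mul_nonneg (hc0 α) (pow_nonneg h _)) (pow_nonneg hx2 _)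

lemma negPart_continuousOn {p : ℕ} (hp : 1 ≤ p) :
    ContinuousOn (_root_.negPart p) (Set.Icc (-1:ℝ) 1) := by
  rw [np_eq hp]
  exact ((continuous_neg.max continuous_const).pow p).continuousOn

/-- The upper bound `d⁺_{p,m}(M)`. -/
def dplus {s : ℕ} (p m : ℕ) {M : Matrix (Fin s) (Fin s) ℂ} (hM : M.IsHermitian) : ℝ :=
  sInf { r : ℝ | ∃ q : Polynomial ℝ, q.natDegree ≤ m ∧
    (∀ x ∈ Set.Icc (-1 : ℝ) 1, negPart p x ≤ q.eval x) ∧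
    r = trFun hM (fun x => q.eval x) ^ (1 / (p : ℝ)) }

/-- The lower bound `d⁻_{p,m}(M)`. -/
def dminus {s : ℕ} (p m : ℕ) {M : Matrix (Fin s) (Fin s) ℂ} (hM : M.IsHermitian) : ℝ :=
  sSup { r : ℝ | ∃ q : Polynomial ℝ, q.natDegree ≤ m ∧
    (∀ x ∈ Set.Icc (-1 : ℝ) 1, q.eval x ≤ negPart p x) ∧
    r = trFun hM (fun x => q.eval x) ^ (1 / (p : ℝ)) }

/-- The value of the Handelman relaxation at level `m`: the infimum of `tr(q(M))^(1/p)`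
over all polynomials `q` admitting nonnegative Handelman-type certificates
`q(x) = (-x)^p + Σ_α b_α (-x)^{α₁} (1+x)^{α₂}` and
`q(x) = Σ_α c_α x^{α₁} (1-x)^{α₂}` with `α₁ + α₂ ≤ m`. -/
def handel {s : ℕ} (p m : ℕ) {M : Matrix (Fin s) (Fin s) ℂ} (hM : M.IsHermitian) : ℝ :=
  sInf { r : ℝ | ∃ (q : Polynomial ℝ) (b c : ℕ × ℕ → ℝ),
    (∀ α, 0 ≤ b α) ∧ (∀ α, 0 ≤ c α) ∧
    (∀ α : ℕ × ℕ, m < α.1 + α.2 → b α = 0) ∧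
    (∀ α : ℕ × ℕ, m < α.1 + α.2 → c α = 0) ∧
    q = (-X) ^ p + ∑ α ∈ Finset.range (m + 1) ×ˢ Finset.range (m + 1),
          C (b α) * (-X) ^ α.1 * (1 + X) ^ α.2 ∧
    q = ∑ α ∈ Finset.range (m + 1) ×ˢ Finset.range (m + 1),
          C (c α) * X ^ α.1 * (1 - X) ^ α.2 ∧
    r = trFun hM (fun x => q.eval x) ^ (1 / (p : ℝ)) }

/-- the Handelman bounds `D_m(M)` satisfy
`d_p(M) ≤ d⁺_{p,m}(M) ≤ D_m(M)` for all `m ≥ p`, they are monotonically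
nonincreasing in `m`, and they converge to `d_p(M)` as `m → ∞`. -/
theorem statement16 (s : ℕ) (p : ℕ) (hp : 1 ≤ p)
    (M : Matrix (Fin s) (Fin s) ℂ) (hM : M.IsHermitian)
    (hnorm : ∀ i, |hM.eigenvalues i| ≤ 1) :
    (∀ m, p ≤ m →
      distPSD (p : ℝ) hM ≤ dplus p m hM ∧ dplus p m hM ≤ handel p m hM) ∧
    (∀ m₁ m₂, p ≤ m₁ → m₁ ≤ m₂ → handel p m₂ hM ≤ handel p m₁ hM) ∧
    Filter.Tendsto (fun m => handel p m hM) Filter.atTop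
      (nhds (distPSD (p : ℝ) hM)) := by
  classical
  have hp0 : (0:ℝ) < (p:ℝ) := by exact_mod_cast hp
  have hinv : (0:ℝ) < 1/(p:ℝ) := by positivity
  have hlam : ∀ i, hM.eigenvalues i ∈ Set.Icc (-1:ℝ) 1 :=
    fun i => Set.mem_Icc.2 (abs_le.1 (hnorm i))
  set F := trFun hM (_root_.negPart p) with hFdef
  have hF0 : 0 ≤ F := trFun_nonneg hM fun i => np_nonneg hp _
  let SP : ℕ → Set ℝ := fun m => { r : ℝ | ∃ q : Polynomial ℝ, q.natDegree ≤ m ∧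
    (∀ x ∈ Set.Icc (-1 : ℝ) 1, negPart p x ≤ q.eval x) ∧
    r = trFun hM (fun x => q.eval x) ^ (1 / (p : ℝ)) }
  let SH : ℕ → Set ℝ := fun m => { r : ℝ | ∃ (q : Polynomial ℝ) (b c : ℕ × ℕ → ℝ),
    (∀ α, 0 ≤ b α) ∧ (∀ α, 0 ≤ c α) ∧
    (∀ α : ℕ × ℕ, m < α.1 + α.2 → b α = 0) ∧
    (∀ α : ℕ × ℕ, m < α.1 + α.2 → c α = 0) ∧
    q = (-X) ^ p + ∑ α ∈ Finset.range (m + 1) ×ˢ Finset.range (m + 1),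
          C (b α) * (-X) ^ α.1 * (1 + X) ^ α.2 ∧
    q = ∑ α ∈ Finset.range (m + 1) ×ˢ Finset.range (m + 1),
          C (c α) * X ^ α.1 * (1 - X) ^ α.2 ∧
    r = trFun hM (fun x => q.eval x) ^ (1 / (p : ℝ)) }
  have hdplus : ∀ m, dplus p m hM = sInf (SP m) := fun m => rfl
  have hhandel : ∀ m, handel p m hM = sInf (SH m) := fun m => rfl
  have hSPr0 : ∀ m r, r ∈ SP m → 0 ≤ r := by
    rintro m r ⟨q, hdeg, hge, rfl⟩
    apply Real.rpow_nonneg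
    exact trFun_nonneg hM fun i => le_trans (np_nonneg hp _) (hge _ (hlam i))
  have hSPbdd : ∀ m, BddBelow (SP m) := fun m => ⟨0, fun r hr => hSPr0 m r hr⟩
  have hSHsub : ∀ m, SH m ⊆ SP m := by
    rintro m r ⟨q, b, c, hb0, hc0, hbv, hcv, hbrep, hcrep, rfl⟩
    exact ⟨q, Bcone.natDegree_le ⟨c, hc0, hcv, hcrep⟩,
      cert_eval_ge hp hb0 hc0 hbrep hcrep, rfl⟩
  have hSHbdd : ∀ m, BddBelow (SH m) := fun m => ⟨0, fun r hr => hSPr0 m r (hSHsub m hr)⟩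
  have hSHne : ∀ m, p ≤ m → (SH m).Nonempty := by
    intro m hm
    obtain ⟨b, c, hb0, hc0, hbv, hcv, hbrep, hcrep⟩ :=
      handel_cert ((q0_Bcone p).mono hm) ((q0_Bcone_neg hp).mono hm)
    exact ⟨_, q0 p, b, c, hb0, hc0, hbv, hcv, hbrep, hcrep, rfl⟩
  have hSPne : ∀ m, p ≤ m → (SP m).Nonempty := by
    intro m hm
    obtain ⟨r, hr⟩ := hSHne m hm
    exact ⟨r, hSHsub m hr⟩
  have hFle : ∀ m r, r ∈ SP m → F ^ (1/(p:ℝ)) ≤ r := by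
    rintro m r ⟨q, hdeg, hge, rfl⟩
    apply Real.rpow_le_rpow hF0 _ hinv.le
    exact trFun_mono hM fun i => hge _ (hlam i)
  have hpart1 : ∀ m, p ≤ m →
      distPSD (p : ℝ) hM ≤ dplus p m hM ∧ dplus p m hM ≤ handel p m hM := by
    intro m hm
    constructor
    · rw [distPSD_eq hp hM, ← hFdef, hdplus m]
      exact le_csInf (hSPne m hm) (fun r hr => hFle m r hr)
    · rw [hdplus m, hhandel m]
      exact csInf_le_csInf (hSPbdd m) (hSHne m hm) (hSHsub m)
  have hpart2 : ∀ m₁ m₂, p ≤ m₁ → m₁ ≤ m₂ → handel p m₂ hM ≤ handel p m₁ hM := by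
    intro m₁ m₂ hpm hmm
    rw [hhandel m₁, hhandel m₂]
    apply csInf_le_csInf (hSHbdd m₂) (hSHne m₁ hpm)
    rintro r ⟨q, b, c, hb0, hc0, hbv, hcv, hbrep, hcrep, rfl⟩
    exact ⟨q, b, c, hb0, hc0, (fun α hα => hbv α (by omega)), (fun α hα => hcv α (by omega)),
      by rw [hbrep, coneSum_ext hmm (-X) (1+X) b hbv],
      by rw [hcrep, coneSum_ext hmm X (1-X) c hcv], rfl⟩
  refine ⟨hpart1, hpart2, ?_⟩
  have hL : ∀ m, p ≤ m → F ^ (1/(p:ℝ)) ≤ handel p m hM := by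
    intro m hm
    have h1 := (hpart1 m hm).1
    have h2 := (hpart1 m hm).2
    rw [distPSD_eq hp hM, ← hFdef] at h1
    linarith
  have hU : ∀ ε : ℝ, 0 < ε → ∃ m₀, p ≤ m₀ ∧ ∀ m, m₀ ≤ m →
      handel p m hM ≤ (F + 3*ε) ^ (1/(p:ℝ)) := by
    intro ε hε
    obtain ⟨rp, hrp⟩ := exists_polynomial_near_of_continuousOn (-1) 1 (_root_.negPart p)
      (negPart_continuousOn hp) ε hε
    set q : ℝ[X] := rp + C (2*ε) with hqdef
    have hqeval : ∀ x, q.eval x = rp.eval x + 2*ε := by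
      intro x; rw [hqdef]; simp
    have hq1 : ∀ x ∈ Set.Icc (-1:ℝ) 1,
        _root_.negPart p x + ε ≤ q.eval x ∧ q.eval x ≤ _root_.negPart p x + 3*ε := by
      intro x hx
      have h := abs_lt.1 (hrp x hx)
      rw [hqeval]
      constructor <;> [linarith [h.1]; linarith [h.2]]
    have hIccsub : ∀ x : ℝ, x ∈ Set.Icc (0:ℝ) 1 → x ∈ Set.Icc (-1:ℝ) 1 :=
      fun x hx => Set.mem_Icc.2 ⟨by linarith [hx.1], hx.2⟩
    have hIccneg : ∀ x : ℝ, x ∈ Set.Icc (0:ℝ) 1 → -x ∈ Set.Icc (-1:ℝ) 1 :=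
      fun x hx => Set.mem_Icc.2 ⟨by linarith [hx.2], by linarith [hx.1]⟩
    have hqpos : ∀ x ∈ Set.Icc (0:ℝ) 1, 0 < q.eval x := by
      intro x hx
      have h1 := (hq1 x (hIccsub x hx)).1
      have h0 := np_nonneg hp x
      linarith
    have hgpos : ∀ x ∈ Set.Icc (0:ℝ) 1, 0 < ((q - (-X)^p).comp (-X)).eval x := by
      intro x hx
      have hev : ((q - (-X)^p).comp (-X)).eval x = q.eval (-x) - x^p := by
        rw [Polynomial.eval_comp]
        simp [neg_neg]
      rw [hev]
      have h1 := (hq1 (-x) (hIccneg x hx)).1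
      have h2 : _root_.negPart p (-x) = x ^ p := by
        rw [np_eq' hp, neg_neg, max_eq_left hx.1]
      linarith
    obtain ⟨n₁, hn₁⟩ := bernstein_pos hqpos
    obtain ⟨n₂, hn₂⟩ := bernstein_pos hgpos
    refine ⟨max p (max n₁ n₂), le_max_left _ _, ?_⟩
    intro m hm
    obtain ⟨b, c, hb0, hc0, hbv, hcv, hbrep, hcrep⟩ :=
      handel_cert (hn₁.mono (le_trans (le_trans (le_max_left n₁ n₂) (le_max_right p _)) hm))
        (hn₂.mono (le_trans (le_trans (le_max_right n₁ n₂) (le_max_right p _)) hm))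
    have hmem : trFun hM (fun x => q.eval x) ^ (1/(p:ℝ)) ∈ SH m :=
      ⟨q, b, c, hb0, hc0, hbv, hcv, hbrep, hcrep, rfl⟩
    have htr : trFun hM (fun x => q.eval x) ≤ F + 3*ε := by
      rw [hFdef]
      apply trFun_le_add_const hM (by positivity)
      intro i
      exact (hq1 _ (hlam i)).2
    have htr0 : 0 ≤ trFun hM (fun x => q.eval x) := by
      apply trFun_nonneg hM
      intro i
      have h1 := (hq1 _ (hlam i)).1
      have h0 := np_nonneg hp (hM.eigenvalues i)
      linarith
    calc handel p m hM ≤ trFun hM (fun x => q.eval x) ^ (1/(p:ℝ)) := by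
          rw [hhandel m]; exact csInf_le (hSHbdd m) hmem
      _ ≤ (F + 3*ε) ^ (1/(p:ℝ)) := Real.rpow_le_rpow htr0 htr hinv.le
  rw [distPSD_eq hp hM, ← hFdef]
  rw [Metric.tendsto_atTop]
  intro ε' hε'
  have hcont : ContinuousAt (fun t : ℝ => t ^ (1/(p:ℝ))) F :=
    Real.continuousAt_rpow_const F _ (Or.inr hinv.le)
  rw [Metric.continuousAt_iff] at hcont
  obtain ⟨δ, hδ0, hδ⟩ := hcont ε' hε'
  obtain ⟨m₀, hm₀p, hm₀⟩ := hU (δ/6) (by linarith)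
  refine ⟨m₀, ?_⟩
  intro m hm
  have hup := hm₀ m hm
  have hlo := hL m (le_trans hm₀p hm)
  have hdist : dist (F + 3*(δ/6)) F < δ := by
    rw [Real.dist_eq, abs_of_nonneg (by linarith)]
    linarith
  have hnear := hδ hdist
  rw [Real.dist_eq] at hnear
  have h2 := (abs_lt.1 hnear).2
  rw [Real.dist_eq, abs_of_nonneg (by linarith [hlo])]
  linarith [hup, h2, hlo]


end
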